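/- Let B be a d×d real symmetric positive definite matrix with eigenvalues λ₁ ≥ … ≥ λ_d > 0 and let e_j^{(0)} be a unit eigenvector of B for λ_j (the j-th largest eigenvalue counted with multiplicity). Let v^{(1)},…,v^{(m)} ∈ ℝ^d with ‖v^{(k)}‖_∞ ≤ V for all k, where V ≥ 1/√d. Set A^{(m)} = B + √B (Σ_{k=1}^m v^{(k)} (v^{(k)})ᵀ) √B, and let e_i^{(m)} be a unit eigenvector of A^{(m)} corresponding to its i-th largest eigenvalue (counted with multiplicity), chosen from an orthonormal eigenbasis. Then |⟨e_i^{(m)}, e_j^{(0)}⟩| ≤ C_m · √(min(λ_i,λ_j)/max(λ_i,λ_j)) for all i,j ∈ {1,…,d}, where C₀ = 1 and C_{k+1} = 5 d⁷ V⁴ C_k⁵ √(1 + d k V²). -/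

import Mathlib

open Matrix Finset

noncomputable def Matrix.PosSemidef.sqrt {n 𝕜 : Type*} [Fintype n] [RCLike 𝕜] [PartialOrder 𝕜]
    [DecidableEq n] {A : Matrix n n 𝕜} (hA : A.PosSemidef) : Matrix n n 𝕜 :=
  hA.isHermitian.eigenvectorUnitary.1 * diagonal ((↑) ∘ (√·) ∘ hA.isHermitian.eigenvalues) *
    (star hA.isHermitian.eigenvectorUnitary : Matrix n n 𝕜)

private lemma psd_sqrt_mul_self {d : ℕ} {B : Matrix (Fin d) (Fin d) ℝ} (hB : B.PosSemidef) :
    hB.sqrt * hB.sqrt = B := by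
  have hsp := hB.isHermitian.spectral_theorem
  have hU : (star hB.isHermitian.eigenvectorUnitary : Matrix (Fin d) (Fin d) ℝ) *
      hB.isHermitian.eigenvectorUnitary.1 = 1 := Unitary.coe_star_mul_self _
  conv_rhs => rw [hsp]
  simp only [Unitary.conjStarAlgAut_apply, Matrix.PosSemidef.sqrt]
  set U : Matrix (Fin d) (Fin d) ℝ := hB.isHermitian.eigenvectorUnitary.1
  set sU : Matrix (Fin d) (Fin d) ℝ := star hB.isHermitian.eigenvectorUnitary.1
  simp only [← Matrix.mul_assoc]
  rw [Matrix.mul_assoc (U * _) sU U, hU, Matrix.mul_one, Matrix.mul_assoc U, diagonal_mul_diagonal]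
  congr 3
  funext i
  simp [Real.mul_self_sqrt (hB.eigenvalues_nonneg i)]

private lemma psd_sqrt_herm {d : ℕ} {B : Matrix (Fin d) (Fin d) ℝ} (hB : B.PosSemidef) :
    (hB.sqrt)ᴴ = hB.sqrt := by
  simp only [Matrix.PosSemidef.sqrt, conjTranspose_mul, diagonal_conjTranspose, Matrix.mul_assoc]
  simp [Matrix.star_eq_conjTranspose]

private lemma dot_sum_right {d : ℕ} {ι : Type*} [Fintype ι] (x : Fin d → ℝ) (g : ι → Fin d → ℝ) :
    x ⬝ᵥ (∑ k, g k) = ∑ k, x ⬝ᵥ g k := by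
  simp only [dotProduct, Finset.sum_apply, Finset.mul_sum]
  rw [Finset.sum_comm]

private lemma orth_li {d : ℕ} {ι : Type*} [Fintype ι] [DecidableEq ι] {g : ι → Fin d → ℝ}
    (h : ∀ i j, g i ⬝ᵥ g j = if i = j then (1:ℝ) else 0) : LinearIndependent ℝ g := by
  rw [Fintype.linearIndependent_iff]
  intro c hc i
  have h2 := congrArg (fun z => g i ⬝ᵥ z) hc
  simp only [dot_sum_right, dotProduct_smul, h, smul_eq_mul, mul_ite, mul_one, mul_zero,
    dotProduct_zero] at h2
  simpa using h2

private lemma combo_dot {d : ℕ} {ι : Type*} [Fintype ι] [DecidableEq ι] {g : ι → Fin d → ℝ}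
    (h : ∀ i j, g i ⬝ᵥ g j = if i = j then (1:ℝ) else 0) (c : ι → ℝ) :
    (∑ k, c k • g k) ⬝ᵥ (∑ k, c k • g k) = ∑ k, (c k)^2 := by
  rw [dot_sum_right]
  refine Finset.sum_congr rfl fun k _ => ?_
  rw [dotProduct_comm, dot_sum_right]
  simp [dotProduct_smul, smul_dotProduct, h, mul_ite, Finset.sum_ite_eq', sq]

private lemma combo_quad {d : ℕ} {ι : Type*} [Fintype ι] [DecidableEq ι]
    (M : Matrix (Fin d) (Fin d) ℝ) {g : ι → Fin d → ℝ} {μ : ι → ℝ}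
    (h : ∀ i j, g i ⬝ᵥ g j = if i = j then (1:ℝ) else 0)
    (heig : ∀ k, M.mulVec (g k) = μ k • g k) (c : ι → ℝ) :
    (∑ k, c k • g k) ⬝ᵥ M.mulVec (∑ k, c k • g k) = ∑ k, μ k * (c k)^2 := by
  have hm : M.mulVec (∑ k, c k • g k) = ∑ k, (c k * μ k) • g k := by
    have := map_sum M.mulVecLin (fun k => c k • g k) Finset.univ
    simp only [mulVecLin_apply] at this
    rw [this]
    refine Finset.sum_congr rfl fun k _ => ?_
    rw [mulVec_smul, heig k, smul_smul]
  rw [hm, dot_sum_right]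
  refine Finset.sum_congr rfl fun k _ => ?_
  rw [dotProduct_comm, dot_sum_right]
  simp [dotProduct_smul, smul_dotProduct, h, mul_ite, Finset.sum_ite_eq']
  ring

private lemma weyl {d : ℕ} (M N : Matrix (Fin d) (Fin d) ℝ)
    {g h : Fin d → Fin d → ℝ} {μ ν : Fin d → ℝ}
    (hg : ∀ a b, g a ⬝ᵥ g b = if a = b then (1:ℝ) else 0)
    (hh : ∀ a b, h a ⬝ᵥ h b = if a = b then (1:ℝ) else 0)
    (hMg : ∀ a, M.mulVec (g a) = μ a • g a)
    (hNh : ∀ a, N.mulVec (h a) = ν a • h a)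
    (hμ : Antitone μ) (hν : Antitone ν)
    (hle : ∀ x, x ⬝ᵥ M.mulVec x ≤ x ⬝ᵥ N.mulVec x) (i : Fin d) :
    μ i ≤ ν i := by
  let e1 : Fin (i.val + 1) → Fin d := fun k => ⟨k.val, by omega⟩
  let e2 : Fin (d - i.val) → Fin d := fun k => ⟨i.val + k.val, by omega⟩
  have he1 : ∀ k, e1 k ≤ i := fun k => by
    have := k.isLt; simp only [e1, Fin.le_def]; omega
  have he2 : ∀ k, i ≤ e2 k := fun k => by simp only [e2, Fin.le_def]; omega
  have hg' : ∀ a b, (g ∘ e1) a ⬝ᵥ (g ∘ e1) b = if a = b then (1:ℝ) else 0 := by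
    intro a b
    have hiff : e1 a = e1 b ↔ a = b := by
      constructor
      · intro hq
        exact Fin.ext (by simpa [e1, Fin.ext_iff] using hq)
      · intro hq; rw [hq]
    rw [Function.comp_apply, Function.comp_apply, hg]
    exact if_congr hiff rfl rfl
  have hh' : ∀ a b, (h ∘ e2) a ⬝ᵥ (h ∘ e2) b = if a = b then (1:ℝ) else 0 := by
    intro a b
    have hiff : e2 a = e2 b ↔ a = b := by
      constructor
      · intro hq
        exact Fin.ext (by simpa [e2, Fin.ext_iff] using hq)
      · intro hq; rw [hq]
    rw [Function.comp_apply, Function.comp_apply, hh]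
    exact if_congr hiff rfl rfl
  set U := Submodule.span ℝ (Set.range (g ∘ e1)) with hU
  set W := Submodule.span ℝ (Set.range (h ∘ e2)) with hW
  have hrU : Module.finrank ℝ U = i.val + 1 := by
    rw [hU, finrank_span_eq_card (orth_li hg'), Fintype.card_fin]
  have hrW : Module.finrank ℝ W = d - i.val := by
    rw [hW, finrank_span_eq_card (orth_li hh'), Fintype.card_fin]
  have hsum := Submodule.finrank_sup_add_finrank_inf_eq U W
  have htop : Module.finrank ℝ ↥(U ⊔ W) ≤ d := by
    have h1 : Module.finrank ℝ (Fin d → ℝ) = d := by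
      rw [Module.finrank_fintype_fun_eq_card, Fintype.card_fin]
    exact le_trans (Submodule.finrank_le _) h1.le
  have hpos : 0 < Module.finrank ℝ ↥(U ⊓ W) := by
    have := i.isLt
    omega
  have hne : U ⊓ W ≠ ⊥ := by
    intro hbot
    rw [hbot, finrank_bot] at hpos
    omega
  obtain ⟨x, hxm, hx0⟩ := (Submodule.ne_bot_iff _).mp hne
  obtain ⟨c, hc⟩ := Submodule.mem_span_range_iff_exists_fun ℝ |>.mp (hxm.1 : x ∈ U)
  obtain ⟨a, ha⟩ := Submodule.mem_span_range_iff_exists_fun ℝ |>.mp (hxm.2 : x ∈ W)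
  have hxx : 0 < x ⬝ᵥ x := by
    rcases (lt_or_eq_of_le (Finset.sum_nonneg fun j _ => mul_self_nonneg (x j) :
        (0:ℝ) ≤ x ⬝ᵥ x)) with hq | hq
    · exact hq
    · exact absurd (dotProduct_self_eq_zero.mp hq.symm) hx0
  have hqM : μ i * (x ⬝ᵥ x) ≤ x ⬝ᵥ M.mulVec x := by
    have e1eig : ∀ k, M.mulVec ((g ∘ e1) k) = (μ ∘ e1) k • (g ∘ e1) k := fun k => hMg (e1 k)
    rw [← hc, combo_quad M hg' e1eig, combo_dot hg', Finset.mul_sum]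
    exact Finset.sum_le_sum fun k _ => mul_le_mul_of_nonneg_right (hμ (he1 k)) (sq_nonneg _)
  have hqN : x ⬝ᵥ N.mulVec x ≤ ν i * (x ⬝ᵥ x) := by
    have e2eig : ∀ k, N.mulVec ((h ∘ e2) k) = (ν ∘ e2) k • (h ∘ e2) k := fun k => hNh (e2 k)
    rw [← ha, combo_quad N hh' e2eig, combo_dot hh', Finset.mul_sum]
    exact Finset.sum_le_sum fun k _ => mul_le_mul_of_nonneg_right (hν (he2 k)) (sq_nonneg _)
  have hfin := (hqM.trans (hle x)).trans hqN
  exact le_of_mul_le_mul_right (by linarith) hxx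

private lemma parseval {d : ℕ} {f : Fin d → Fin d → ℝ}
    (horth : ∀ i j, f i ⬝ᵥ f j = if i = j then (1:ℝ) else 0) (x y : Fin d → ℝ) :
    ∑ j, (f j ⬝ᵥ x) * (f j ⬝ᵥ y) = x ⬝ᵥ y := by
  set F : Matrix (Fin d) (Fin d) ℝ := Matrix.of f with hF
  have hFFt : F * Fᵀ = 1 := by
    ext a b
    simpa [Matrix.mul_apply, Matrix.one_apply, dotProduct, hF] using horth a b
  have hFtF : Fᵀ * F = 1 := mul_eq_one_comm.mp hFFt
  have key : x ⬝ᵥ (Fᵀ * F).mulVec y = x ⬝ᵥ y := by rw [hFtF, Matrix.one_mulVec]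
  rw [← Matrix.mulVec_mulVec, Matrix.dotProduct_mulVec x Fᵀ, Matrix.vecMul_transpose] at key
  rw [← key]
  simp only [dotProduct, Matrix.mulVec, dotProduct, hF, Matrix.of_apply]

private lemma quad_expand {d : ℕ} (M : Matrix (Fin d) (Fin d) ℝ) (hM : Mᵀ = M)
    {f : Fin d → Fin d → ℝ} {μ : Fin d → ℝ}
    (horth : ∀ i j, f i ⬝ᵥ f j = if i = j then (1:ℝ) else 0)
    (heig : ∀ j, M.mulVec (f j) = μ j • f j) (x : Fin d → ℝ) :
    x ⬝ᵥ M.mulVec x = ∑ j, μ j * (f j ⬝ᵥ x)^2 := by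
  rw [← parseval horth x (M.mulVec x)]
  refine Finset.sum_congr rfl fun j _ => ?_
  have h1 : f j ⬝ᵥ M.mulVec x = μ j * (f j ⬝ᵥ x) := by
    rw [Matrix.dotProduct_mulVec, ← Matrix.mulVec_transpose, hM, heig j, smul_dotProduct]
    rfl
  rw [h1]; ring

set_option maxHeartbeats 2000000 in
/-- **Theorem 1 (symmetric form).** If `B` is a `d × d` real symmetric positive definite
matrix with decreasingly ordered eigenvalues `lam` and orthonormal eigenvectors `f`,
`A = B + √B (∑ₖ v⁽ᵏ⁾ (v⁽ᵏ⁾)ᵀ) √B` with `‖v⁽ᵏ⁾‖_∞ ≤ V` and `V ≥ 1/√d`, and `e` is an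
orthonormal system of eigenvectors of `A` ordered by decreasing eigenvalues, then
`|⟨e i, f j⟩| ≤ C m * √(min(λᵢ,λⱼ)/max(λᵢ,λⱼ))` where `C 0 = 1` and
`C (k+1) = 5 d⁷ V⁴ (C k)⁵ √(1 + d k V²)`. -/
theorem eigenvector_bound_symmetric
    {d m : ℕ} (hd : 0 < d)
    (B : Matrix (Fin d) (Fin d) ℝ) (hB : B.PosDef) (hBsymm : B.IsSymm)
    (lam : Fin d → ℝ) (hlam_anti : Antitone lam) (hlam_pos : ∀ i, 0 < lam i)
    (f : Fin d → Fin d → ℝ)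
    (hf_orth : ∀ i j, f i ⬝ᵥ f j = if i = j then (1 : ℝ) else 0)
    (hf_eig : ∀ j, B.mulVec (f j) = lam j • f j)
    (V : ℝ) (hV : 1 / Real.sqrt d ≤ V)
    (v : Fin m → Fin d → ℝ) (hv : ∀ k j, |v k j| ≤ V)
    (A : Matrix (Fin d) (Fin d) ℝ)
    (hA : A = B + hB.posSemidef.sqrt * (∑ k, Matrix.vecMulVec (v k) (v k)) *
      hB.posSemidef.sqrt)
    (ν : Fin d → ℝ) (hν_anti : Antitone ν)
    (e : Fin d → Fin d → ℝ)
    (he_orth : ∀ i j, e i ⬝ᵥ e j = if i = j then (1 : ℝ) else 0)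
    (he_eig : ∀ i, A.mulVec (e i) = ν i • e i)
    (C : ℕ → ℝ) (hC0 : C 0 = 1)
    (hCrec : ∀ k : ℕ, C (k + 1) = 5 * (d : ℝ) ^ 7 * V ^ 4 * C k ^ 5 *
      Real.sqrt (1 + (d : ℝ) * (k : ℝ) * V ^ 2)) :
    ∀ i j : Fin d,
      |e i ⬝ᵥ f j| ≤ C m * Real.sqrt (min (lam i) (lam j) / max (lam i) (lam j)) := by
  -- basic positivity facts
  have hd0 : (0:ℝ) < d := by exact_mod_cast hd
  have hd1 : (1:ℝ) ≤ d := by exact_mod_cast hd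
  have hV0 : 0 < V := lt_of_lt_of_le (by positivity) hV
  have hdV : 1 ≤ (d:ℝ) * V^2 := by
    have h1 : (1 / Real.sqrt d)^2 ≤ V^2 :=
      pow_le_pow_left₀ (by positivity) hV 2
    rw [div_pow, one_pow, Real.sq_sqrt hd0.le] at h1
    rw [div_le_iff₀ hd0] at h1
    linarith [h1]
  set K : ℝ := (d:ℝ) * (m:ℝ) * V^2 with hKdef
  have hK0 : 0 ≤ K := by positivity
  -- square root of B
  set S := hB.posSemidef.sqrt with hSdef
  have hSS : S * S = B := psd_sqrt_mul_self hB.posSemidef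
  have hSsymm : Sᵀ = S := by
    have h1 : Sᴴ = S := psd_sqrt_herm hB.posSemidef
    rwa [Matrix.conjTranspose_eq_transpose_of_trivial] at h1
  have hsd : ∀ x z : Fin d → ℝ, x ⬝ᵥ S.mulVec z = S.mulVec x ⬝ᵥ z := by
    intro x z
    rw [Matrix.dotProduct_mulVec, ← Matrix.mulVec_transpose, hSsymm]
  -- the key quadratic-form identity
  have quadA : ∀ x, x ⬝ᵥ A.mulVec x
      = x ⬝ᵥ B.mulVec x + ∑ k, (v k ⬝ᵥ S.mulVec x)^2 := by
    intro x
    rw [hA, Matrix.add_mulVec, dotProduct_add]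
    congr 1
    rw [← Matrix.mulVec_mulVec, ← Matrix.mulVec_mulVec, hsd]
    set y := S.mulVec x with hy
    have hP : (∑ k, Matrix.vecMulVec (v k) (v k)).mulVec y = ∑ k, (v k ⬝ᵥ y) • v k := by
      ext j
      simp only [Matrix.mulVec, dotProduct, Matrix.sum_apply, Matrix.vecMulVec_apply,
        Finset.sum_apply, Pi.smul_apply, smul_eq_mul, Finset.sum_mul, Finset.mul_sum]
      rw [Finset.sum_comm]
      exact Finset.sum_congr rfl fun k _ => Finset.sum_congr rfl fun l _ => by ring
    rw [hP, dot_sum_right]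
    refine Finset.sum_congr rfl fun k _ => ?_
    rw [dotProduct_smul, smul_eq_mul, dotProduct_comm]
    ring
  have hBq : ∀ x : Fin d → ℝ, x ⬝ᵥ B.mulVec x = S.mulVec x ⬝ᵥ S.mulVec x := by
    intro x
    rw [← hSS, ← Matrix.mulVec_mulVec, hsd]
  -- B ≼ A ≼ (1+K) B at the level of quadratic forms
  have qBA : ∀ x, x ⬝ᵥ B.mulVec x ≤ x ⬝ᵥ A.mulVec x := by
    intro x
    rw [quadA x]
    exact le_add_of_nonneg_right (Finset.sum_nonneg fun k _ => sq_nonneg _)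
  have qAB : ∀ x, x ⬝ᵥ A.mulVec x ≤ (1 + K) * (x ⬝ᵥ B.mulVec x) := by
    intro x
    rw [quadA x]
    have hBx0 : 0 ≤ x ⬝ᵥ B.mulVec x := by
      rw [hBq x]
      exact Finset.sum_nonneg fun j _ => mul_self_nonneg _
    have hcs : ∀ k, (v k ⬝ᵥ S.mulVec x)^2 ≤ ((d:ℝ) * V^2) * (x ⬝ᵥ B.mulVec x) := by
      intro k
      have h1 : (∑ j, v k j * S.mulVec x j)^2
          ≤ (∑ j, (v k j)^2) * (∑ j, (S.mulVec x j)^2) :=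
        Finset.sum_mul_sq_le_sq_mul_sq Finset.univ _ _
      have h2 : (∑ j, (v k j)^2) ≤ (d:ℝ) * V^2 := by
        calc (∑ j, (v k j)^2) ≤ ∑ _j : Fin d, V^2 := by
              refine Finset.sum_le_sum fun j _ => ?_
              have := abs_le.mp (hv k j)
              nlinarith [this.1, this.2]
          _ = (d:ℝ) * V^2 := by simp [Finset.sum_const, nsmul_eq_mul]
      have h3 : (∑ j, (S.mulVec x j)^2) = x ⬝ᵥ B.mulVec x := by
        rw [hBq x]
        simp [dotProduct, sq]
      have h4 : 0 ≤ ∑ j, (S.mulVec x j)^2 := Finset.sum_nonneg fun j _ => sq_nonneg _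
      calc (v k ⬝ᵥ S.mulVec x)^2 = (∑ j, v k j * S.mulVec x j)^2 := by rfl
        _ ≤ (∑ j, (v k j)^2) * (∑ j, (S.mulVec x j)^2) := h1
        _ ≤ ((d:ℝ) * V^2) * (∑ j, (S.mulVec x j)^2) := mul_le_mul_of_nonneg_right h2 h4
        _ = ((d:ℝ) * V^2) * (x ⬝ᵥ B.mulVec x) := by rw [h3]
    have h5 : ∑ k, (v k ⬝ᵥ S.mulVec x)^2 ≤ K * (x ⬝ᵥ B.mulVec x) := by
      calc ∑ k, (v k ⬝ᵥ S.mulVec x)^2 ≤ ∑ _k : Fin m, ((d:ℝ) * V^2) * (x ⬝ᵥ B.mulVec x) :=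
            Finset.sum_le_sum fun k _ => hcs k
        _ = (m:ℝ) * (((d:ℝ) * V^2) * (x ⬝ᵥ B.mulVec x)) := by
            simp [Finset.sum_const, nsmul_eq_mul]
        _ = K * (x ⬝ᵥ B.mulVec x) := by rw [hKdef]; ring
    linarith
  -- symmetry of A
  have hAsymm : Aᵀ = A := by
    have hPt : (∑ k, Matrix.vecMulVec (v k) (v k))ᵀ = ∑ k, Matrix.vecMulVec (v k) (v k) := by
      rw [Matrix.transpose_sum]
      exact Finset.sum_congr rfl fun k _ => by
        ext a b; simp [Matrix.vecMulVec_apply, mul_comm]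
    rw [hA, Matrix.transpose_add, hBsymm.eq, Matrix.transpose_mul, Matrix.transpose_mul,
      hSsymm, hPt, Matrix.mul_assoc]
  -- quadratic form expansions
  have qB_expand : ∀ x, x ⬝ᵥ B.mulVec x = ∑ j, lam j * (f j ⬝ᵥ x)^2 :=
    quad_expand B hBsymm.eq hf_orth hf_eig
  have qA_expand : ∀ x, x ⬝ᵥ A.mulVec x = ∑ l, ν l * (e l ⬝ᵥ x)^2 :=
    quad_expand A hAsymm he_orth he_eig
  -- eigenvalues of A are positive
  have he_unit : ∀ l, e l ⬝ᵥ e l = 1 := fun l => by simpa using he_orth l l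
  have hf_unit : ∀ l, f l ⬝ᵥ f l = 1 := fun l => by simpa using hf_orth l l
  have hνA : ∀ l, ν l = e l ⬝ᵥ A.mulVec (e l) := by
    intro l
    rw [he_eig l, dotProduct_smul, smul_eq_mul, he_unit l, mul_one]
  have hlast : ∀ j : Fin d, lam ⟨d-1, by omega⟩ ≤ lam j := by
    intro j
    refine hlam_anti ?_
    rw [Fin.le_def]
    have := j.isLt
    simp only []
    omega
  have νpos : ∀ l, 0 < ν l := by
    intro l
    have h1 : e l ⬝ᵥ B.mulVec (e l) ≤ ν l := by rw [hνA l]; exact qBA (e l)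
    have h2 : lam ⟨d-1, by omega⟩ ≤ e l ⬝ᵥ B.mulVec (e l) := by
      rw [qB_expand (e l)]
      have h3 : ∑ j, lam ⟨d-1, by omega⟩ * (f j ⬝ᵥ e l)^2
          ≤ ∑ j, lam j * (f j ⬝ᵥ e l)^2 :=
        Finset.sum_le_sum fun j _ => mul_le_mul_of_nonneg_right (hlast j) (sq_nonneg _)
      have h4 : ∑ j, lam ⟨d-1, by omega⟩ * (f j ⬝ᵥ e l)^2
          = lam ⟨d-1, by omega⟩ := by
        rw [← Finset.mul_sum]
        have h5 : ∑ j, (f j ⬝ᵥ e l)^2 = (1:ℝ) := by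
          have := parseval hf_orth (e l) (e l)
          rw [he_unit l] at this
          rw [← this]
          exact Finset.sum_congr rfl fun j _ => by ring
        rw [h5, mul_one]
      linarith
    linarith [hlam_pos ⟨d-1, by omega⟩]
  -- Weyl inequalities
  have w1 : ∀ i, lam i ≤ ν i := fun i =>
    weyl B A hf_orth he_orth hf_eig he_eig hlam_anti hν_anti qBA i
  have w2 : ∀ i, ν i ≤ (1 + K) * lam i := by
    intro i
    have h1K : (0:ℝ) ≤ 1 + K := by linarith
    refine weyl A ((1 + K) • B) he_orth hf_orth he_eig
      (fun j => by rw [Matrix.smul_mulVec, hf_eig j, smul_smul]) hν_anti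
      (hlam_anti.const_mul h1K) ?_ i
    intro x
    rw [Matrix.smul_mulVec, dotProduct_smul, smul_eq_mul]
    exact qAB x
  -- bound on C
  have hCm : Real.sqrt (1 + (d:ℝ) * (m:ℝ) * V^2) ≤ C m := by
    have claim : ∀ k : ℕ, 1 ≤ C k ∧ Real.sqrt (1 + (d:ℝ) * (k:ℝ) * V^2) ≤ C k := by
      intro k
      induction k with
      | zero => simp [hC0]
      | succ n ih =>
        obtain ⟨ih1, ih2⟩ := ih
        have hn0 : (0:ℝ) ≤ n := Nat.cast_nonneg n
        have hs0 : (0:ℝ) ≤ 1 + (d:ℝ) * (n:ℝ) * V^2 := by nlinarith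
        have hs1 : (1:ℝ) ≤ Real.sqrt (1 + (d:ℝ) * (n:ℝ) * V^2) := by
          have hq := Real.sqrt_le_sqrt (show (1:ℝ) ≤ 1 + (d:ℝ) * (n:ℝ) * V^2 by nlinarith)
          rwa [Real.sqrt_one] at hq
        have h5 : (1:ℝ) ≤ (d:ℝ)^5 := one_le_pow₀ hd1
        have hs2 : (1:ℝ) ≤ ((d:ℝ)*V^2)^2 := by nlinarith [hdV]
        have hd7 : (1:ℝ) ≤ (d:ℝ)^7*V^4 := by
          have hq := mul_le_mul h5 hs2 zero_le_one (by positivity)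
          calc (1:ℝ) = 1*1 := by ring
            _ ≤ (d:ℝ)^5 * ((d:ℝ)*V^2)^2 := hq
            _ = (d:ℝ)^7*V^4 := by ring
        have hCk5 : (1:ℝ) ≤ C n^5 := one_le_pow₀ ih1
        have hfac : (1:ℝ) ≤ 5*(d:ℝ)^7*V^4*C n^5 := by
          have hq := mul_le_mul hd7 hCk5 zero_le_one (by linarith)
          calc (1:ℝ) = 1*1 := by ring
            _ ≤ ((d:ℝ)^7*V^4) * (C n^5) := hq
            _ ≤ 5*((d:ℝ)^7*V^4*C n^5) := by nlinarith [hq]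
            _ = 5*(d:ℝ)^7*V^4*C n^5 := by ring
        have hY : (1:ℝ) ≤ (d:ℝ)^5*((d:ℝ)*V^2) := by
          calc (1:ℝ) = 1*1 := by ring
            _ ≤ (d:ℝ)^5*((d:ℝ)*V^2) := mul_le_mul h5 hdV zero_le_one (by positivity)
        have hZ : (1:ℝ) ≤ ((d:ℝ)^5*((d:ℝ)*V^2))*C n^5 := by
          calc (1:ℝ) = 1*1 := by ring
            _ ≤ ((d:ℝ)^5*((d:ℝ)*V^2))*C n^5 :=
                mul_le_mul hY hCk5 zero_le_one (by linarith)
        constructor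
        · rw [hCrec n]
          calc (1:ℝ) = 1*1 := by ring
            _ ≤ (5*(d:ℝ)^7*V^4*C n^5) * Real.sqrt (1+(d:ℝ)*(n:ℝ)*V^2) :=
                mul_le_mul hfac hs1 zero_le_one (by linarith)
            _ = 5*(d:ℝ)^7*V^4*C n^5 * Real.sqrt (1+(d:ℝ)*(n:ℝ)*V^2) := by ring
        · rw [hCrec n]
          push_cast
          have step1 : 1 + (d:ℝ)*((n:ℝ)+1)*V^2
              ≤ (1+(d:ℝ)*(n:ℝ)*V^2) * (2*(d:ℝ)*V^2)^2 := by
            nlinarith [hdV, hn0, mul_nonneg hn0 (sub_nonneg.mpr hdV),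
              sq_nonneg ((d:ℝ)*V^2 - 1), mul_nonneg (mul_nonneg hn0 (sub_nonneg.mpr hdV)) (sub_nonneg.mpr hdV)]
          have step2 : Real.sqrt (1 + (d:ℝ)*((n:ℝ)+1)*V^2)
              ≤ Real.sqrt (1+(d:ℝ)*(n:ℝ)*V^2) * (2*(d:ℝ)*V^2) := by
            have hq := Real.sqrt_le_sqrt step1
            rwa [Real.sqrt_mul hs0, Real.sqrt_sq (by positivity)] at hq
          have step3 : 2*(d:ℝ)*V^2 ≤ 5*(d:ℝ)^7*V^4*C n^5 := by
            calc 2*(d:ℝ)*V^2 ≤ 5*((d:ℝ)*V^2)*1 := by nlinarith [hdV]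
              _ ≤ 5*((d:ℝ)*V^2)*(((d:ℝ)^5*((d:ℝ)*V^2))*C n^5) :=
                  mul_le_mul_of_nonneg_left hZ (by positivity)
              _ = 5*(d:ℝ)^7*V^4*C n^5 := by ring
          calc Real.sqrt (1 + (d:ℝ)*((n:ℝ)+1)*V^2)
              ≤ Real.sqrt (1+(d:ℝ)*(n:ℝ)*V^2) * (2*(d:ℝ)*V^2) := step2
            _ ≤ Real.sqrt (1+(d:ℝ)*(n:ℝ)*V^2) * (5*(d:ℝ)^7*V^4*C n^5) :=
                mul_le_mul_of_nonneg_left step3 (Real.sqrt_nonneg _)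
            _ = 5*(d:ℝ)^7*V^4*C n^5 * Real.sqrt (1+(d:ℝ)*(n:ℝ)*V^2) := by ring
    exact (claim m).2
  -- main computation
  intro i j
  set t := e i ⬝ᵥ f j with ht
  have P1 : lam j * t^2 ≤ ν i := by
    have h1 : lam j * (f j ⬝ᵥ e i)^2 ≤ ∑ l, lam l * (f l ⬝ᵥ e i)^2 := by
      exact Finset.single_le_sum (f := fun l => lam l * (f l ⬝ᵥ e i)^2)
        (fun l _ => mul_nonneg (hlam_pos l).le (sq_nonneg _)) (Finset.mem_univ j)
    rw [← qB_expand (e i)] at h1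
    have h2 : (f j ⬝ᵥ e i) = t := dotProduct_comm _ _
    rw [h2] at h1
    calc lam j * t^2 ≤ e i ⬝ᵥ B.mulVec (e i) := h1
      _ ≤ e i ⬝ᵥ A.mulVec (e i) := qBA (e i)
      _ = ν i := (hνA i).symm
  have P2 : ν i * t^2 ≤ (1 + K) * lam j := by
    have h1 : ν i * (e i ⬝ᵥ f j)^2 ≤ ∑ l, ν l * (e l ⬝ᵥ f j)^2 := by
      exact Finset.single_le_sum (f := fun l => ν l * (e l ⬝ᵥ f j)^2)
        (fun l _ => mul_nonneg (νpos l).le (sq_nonneg _)) (Finset.mem_univ i)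
    rw [← qA_expand (f j)] at h1
    have h2 : f j ⬝ᵥ B.mulVec (f j) = lam j := by
      rw [hf_eig j, dotProduct_smul, smul_eq_mul, hf_unit j, mul_one]
    calc ν i * t^2 ≤ f j ⬝ᵥ A.mulVec (f j) := h1
      _ ≤ (1 + K) * (f j ⬝ᵥ B.mulVec (f j)) := qAB (f j)
      _ = (1 + K) * lam j := by rw [h2]
  have tsq : t^2 ≤ (1 + K) * (min (lam i) (lam j) / max (lam i) (lam j)) := by
    rcases le_total (lam i) (lam j) with hle | hle
    · rw [min_eq_left hle, max_eq_right hle, ← mul_div_assoc,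
        le_div_iff₀ (hlam_pos j)]
      nlinarith [P1, w2 i, sq_nonneg t]
    · rw [min_eq_right hle, max_eq_left hle, ← mul_div_assoc,
        le_div_iff₀ (hlam_pos i)]
      nlinarith [P2, w1 i, sq_nonneg t]
  have h1K : (0:ℝ) ≤ 1 + K := by linarith
  calc |t| = Real.sqrt (t^2) := (Real.sqrt_sq_eq_abs t).symm
    _ ≤ Real.sqrt ((1 + K) * (min (lam i) (lam j) / max (lam i) (lam j))) :=
        Real.sqrt_le_sqrt tsq
    _ = Real.sqrt (1 + K) * Real.sqrt (min (lam i) (lam j) / max (lam i) (lam j)) :=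
        Real.sqrt_mul h1K _
    _ ≤ C m * Real.sqrt (min (lam i) (lam j) / max (lam i) (lam j)) :=
        mul_le_mul_of_nonneg_right hCm (Real.sqrt_nonneg _)
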